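/- Let L be a nonnegative random variable with an asymptotically exponential tail with decay rate μ > 0, let M ≥ 2 be an integer and λ, ν > 0. Define the random variable N̄ by P[N̄ > n] = E[(1 − ((λ∧ν)/(M(λ∨ν))) e^{−L(M−1)(λ∨ν)})^n] for n ∈ ℕ. Then lim_{n→∞} (log P[N̄ > n]) / (log n) = −μ / ((M−1)(λ∨ν)). -/

import Mathlib

open MeasureTheory Filter

set_option maxHeartbeats 2000000 in
/-- Proposition 1, eq. (6): power law for the upper-bounding number of retransmissions
`P[N̄ > n] = E[(1 - ((λ∧ν)/(M(λ∨ν))) e^{-L(M-1)(λ∨ν)})^n]` in finite population ALOHA. -/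
theorem stmt1 {Ω : Type*} {mΩ : MeasurableSpace Ω} (P : Measure Ω) [IsProbabilityMeasure P]
    (L : Ω → ℝ) (hLm : Measurable L) (hLnn : ∀ ω, 0 ≤ L ω)
    (μ lam ν : ℝ) (hμ : 0 < μ) (hlam : 0 < lam) (hν : 0 < ν)
    (M : ℕ) (hM : 2 ≤ M)
    (htail : Tendsto (fun x : ℝ => Real.log (P {ω | L ω > x}).toReal / x) atTop (nhds (-μ))) :
    Tendsto (fun n : ℕ =>
        Real.log (∫ ω,
            (1 - (min lam ν / ((M : ℝ) * max lam ν)) *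
              Real.exp (-(L ω * ((M : ℝ) - 1) * max lam ν))) ^ n ∂P)
          / Real.log n) atTop
      (nhds (-(μ / (((M : ℝ) - 1) * max lam ν)))) := by
  have hmax : 0 < max lam ν := lt_max_of_lt_left hlam
  have hM2 : (2:ℝ) ≤ (M:ℝ) := by exact_mod_cast hM
  set a : ℝ := ((M:ℝ) - 1) * max lam ν with ha_def
  have ha : 0 < a := mul_pos (by linarith) hmax
  set c : ℝ := min lam ν / ((M:ℝ) * max lam ν) with hc_def
  have hc0 : 0 < c := div_pos (lt_min hlam hν) (mul_pos (by linarith) hmax)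
  have hc2 : c ≤ 1/2 := by
    rw [hc_def, div_le_iff₀ (mul_pos (by linarith : (0:ℝ) < M) hmax)]
    have h1 : min lam ν ≤ max lam ν := (min_le_left _ _).trans (le_max_left _ _)
    nlinarith [hmax.le]
  -- basic bounds on the base of the power
  have hLa : ∀ ω, L ω * ((M:ℝ) - 1) * max lam ν = L ω * a := fun ω => mul_assoc _ _ _
  have hbase : ∀ ω, 1/2 ≤ 1 - c * Real.exp (-(L ω * ((M:ℝ) - 1) * max lam ν)) ∧
      1 - c * Real.exp (-(L ω * ((M:ℝ) - 1) * max lam ν)) ≤ 1 := by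
    intro ω
    have hE0 : 0 < Real.exp (-(L ω * ((M:ℝ) - 1) * max lam ν)) := Real.exp_pos _
    have hE1 : Real.exp (-(L ω * ((M:ℝ) - 1) * max lam ν)) ≤ 1 := by
      rw [Real.exp_le_one_iff, neg_nonpos]
      rw [hLa ω]
      exact mul_nonneg (hLnn ω) ha.le
    have h3 : c * Real.exp (-(L ω * ((M:ℝ) - 1) * max lam ν)) ≤ c * 1 :=
      mul_le_mul_of_nonneg_left hE1 hc0.le
    have h4 : 0 < c * Real.exp (-(L ω * ((M:ℝ) - 1) * max lam ν)) := mul_pos hc0 hE0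
    constructor <;> nlinarith
  have hmeas : ∀ n : ℕ, Measurable fun ω =>
      (1 - c * Real.exp (-(L ω * ((M:ℝ) - 1) * max lam ν))) ^ n := by
    intro n
    exact (measurable_const.sub ((((hLm.mul_const _).mul_const _).neg.exp).const_mul c)).pow_const n
  have hint : ∀ n : ℕ, Integrable
      (fun ω => (1 - c * Real.exp (-(L ω * ((M:ℝ) - 1) * max lam ν))) ^ n) P := by
    intro n
    refine (integrable_const (1:ℝ)).mono' (hmeas n).aestronglyMeasurable ?_
    filter_upwards with ω
    have h := hbase ω
    rw [Real.norm_eq_abs, abs_of_nonneg (pow_nonneg (by linarith [h.1]) n)]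
    exact pow_le_one₀ (by linarith [h.1]) h.2
  set I : ℕ → ℝ := fun n =>
    ∫ ω, (1 - c * Real.exp (-(L ω * ((M:ℝ) - 1) * max lam ν))) ^ n ∂P with hI_def
  have hIlb : ∀ n : ℕ, ((1:ℝ)/2) ^ n ≤ I n := by
    intro n
    have h : ∫ _ω, ((1:ℝ)/2)^n ∂P ≤ I n := by
      refine integral_mono (integrable_const _) (hint n) ?_
      intro ω
      exact pow_le_pow_left₀ (by norm_num) (hbase ω).1 n
    simpa [measure_univ] using h
  have hIpos : ∀ n : ℕ, 0 < I n := fun n => lt_of_lt_of_le (by positivity) (hIlb n)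
  set p : ℝ → ℝ := fun x => (P {ω | L ω > x}).toReal with hp_def
  have hp_nn : ∀ x, 0 ≤ p x := fun x => ENNReal.toReal_nonneg
  have hp1 : ∀ x, p x ≤ 1 := by
    intro x
    have := ENNReal.toReal_mono (by norm_num) (prob_le_one (μ := P) (s := {ω | L ω > x}))
    simpa using this
  have hpmeas : ∀ x : ℝ, MeasurableSet {ω | L ω > x} := fun x => hLm measurableSet_Ioi
  have hp_anti : ∀ x y : ℝ, x ≤ y → p y ≤ p x := by
    intro x y hxy
    exact ENNReal.toReal_mono (measure_ne_top P _)
      (measure_mono (fun ω hω => lt_of_le_of_lt hxy hω))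
  have hp_pos : ∀ x : ℝ, 0 < p x := by
    intro x
    rcases lt_or_ge 0 (p x) with h | h
    · exact h
    · exfalso
      have hx0 : p x = 0 := le_antisymm h (hp_nn x)
      have hzero : ∀ y : ℝ, x ≤ y → p y = 0 := fun y hy =>
        le_antisymm (hx0 ▸ hp_anti x y hy) (hp_nn y)
      have h0 : Tendsto (fun y : ℝ => Real.log (p y) / y) atTop (nhds 0) := by
        have heq : (fun y : ℝ => Real.log (p y) / y) =ᶠ[atTop] fun _ => (0:ℝ) := by
          filter_upwards [eventually_ge_atTop x] with y hy
          simp [hzero y hy]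
        exact Tendsto.congr' heq.symm tendsto_const_nhds
      have := tendsto_nhds_unique htail h0
      linarith
  -- tail bounds
  have htb : ∀ δ : ℝ, 0 < δ → ∀ᶠ x : ℝ in atTop,
      (-μ - δ) * x ≤ Real.log (p x) ∧ Real.log (p x) ≤ (-μ + δ) * x := by
    intro δ hδ
    filter_upwards [htail.eventually (Metric.ball_mem_nhds _ hδ), eventually_gt_atTop (0:ℝ)]
      with x hx hx0
    rw [Real.dist_eq] at hx
    have hx' := abs_lt.mp hx
    constructor
    · have h1 : -μ - δ < Real.log (p x) / x := by linarith [hx'.1]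
      exact ((lt_div_iff₀ hx0).mp h1).le
    · have h2 : Real.log (p x) / x < -μ + δ := by linarith [hx'.2]
      exact ((div_lt_iff₀ hx0).mp h2).le
  have hlogn : Tendsto (fun n : ℕ => Real.log n) atTop atTop :=
    Real.tendsto_log_atTop.comp tendsto_natCast_atTop_atTop
  -- lower bound on I n by restricting to {L > x}
  have hS : ∀ (n : ℕ) (x : ℝ), 0 ≤ x → (1 - c * Real.exp (-(x * a))) ^ n * p x ≤ I n := by
    intro n x hx
    have hE1 : Real.exp (-(x * a)) ≤ 1 := by
      rw [Real.exp_le_one_iff, neg_nonpos]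
      exact mul_nonneg hx ha.le
    have hK0 : 0 ≤ 1 - c * Real.exp (-(x * a)) := by
      have := mul_le_mul_of_nonneg_left hE1 hc0.le
      nlinarith
    have hg0 : (0:Ω → ℝ) ≤ᶠ[ae P]
        fun ω => (1 - c * Real.exp (-(L ω * ((M:ℝ) - 1) * max lam ν))) ^ n := by
      filter_upwards with ω
      exact pow_nonneg (by linarith [(hbase ω).1]) n
    have h1 : ∫ ω in {ω | L ω > x},
        (1 - c * Real.exp (-(L ω * ((M:ℝ) - 1) * max lam ν))) ^ n ∂P ≤ I n :=
      setIntegral_le_integral (hint n) hg0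
    have h2 : ∫ _ω in {ω | L ω > x}, (1 - c * Real.exp (-(x * a))) ^ n ∂P ≤
        ∫ ω in {ω | L ω > x},
          (1 - c * Real.exp (-(L ω * ((M:ℝ) - 1) * max lam ν))) ^ n ∂P := by
      refine setIntegral_mono_on integrableOn_const
        ((hint n).integrableOn) (hpmeas x) ?_
      intro ω hω
      refine pow_le_pow_left₀ hK0 ?_ n
      have hmono : Real.exp (-(L ω * ((M:ℝ) - 1) * max lam ν)) ≤ Real.exp (-(x * a)) := by
        rw [Real.exp_le_exp, neg_le_neg_iff, hLa ω]
        exact mul_le_mul_of_nonneg_right (le_of_lt hω) ha.le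
      nlinarith [mul_le_mul_of_nonneg_left hmono hc0.le]
    have h3 : ∫ _ω in {ω | L ω > x}, (1 - c * Real.exp (-(x * a))) ^ n ∂P =
        (1 - c * Real.exp (-(x * a))) ^ n * p x := by
      rw [setIntegral_const]
      simp [hp_def, mul_comm, measureReal_def]
    linarith [h1, h2, h3.symm.le]
  -- now prove the limit
  rw [show (-(μ / (((M:ℝ) - 1) * max lam ν))) = -(μ / a) from rfl]
  refine tendsto_order.2 ⟨?_, ?_⟩
  · -- lower bound branch
    intro b hb
    have hd : 0 < -b - μ / a := by
      have : b < -(μ/a) := hb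
      linarith
    set d : ℝ := -b - μ / a with hd_def
    set ε : ℝ := min 1 (d * a / (2 * (μ + 2))) with hε_def
    have hε0 : 0 < ε := lt_min one_pos (div_pos (mul_pos hd ha) (by linarith))
    have hε1 : ε ≤ 1 := min_le_left _ _
    have hεle : ε * (2 * (μ + 2)) ≤ d * a := by
      have h := min_le_right 1 (d * a / (2 * (μ + 2)))
      calc ε * (2 * (μ + 2)) ≤ (d * a / (2 * (μ + 2))) * (2 * (μ + 2)) := by
            apply mul_le_mul_of_nonneg_right h; positivity
        _ = d * a := div_mul_cancel₀ _ (by positivity)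
    have hkey : (μ + ε) * (1 + ε) / a < -b := by
      rw [div_lt_iff₀ ha]
      have hba : -b * a = d * a + μ := by
        rw [hd_def]; field_simp; ring
      nlinarith [sq_nonneg ε, hε0.le, hμ.le]
    -- eventual Bernoulli bound
    have hsmall : Tendsto (fun n : ℕ => c * Real.exp (-(ε * Real.log n))) atTop (nhds 0) := by
      have h1 : Tendsto (fun n : ℕ => -(ε * Real.log n)) atTop atBot :=
        tendsto_neg_atTop_atBot.comp (hlogn.const_mul_atTop hε0)
      have h2 := Real.tendsto_exp_atBot.comp h1
      simpa using h2.const_mul c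
    have hKev : ∀ᶠ n : ℕ in atTop,
        (1:ℝ)/2 ≤ (1 - c * Real.exp (-((1 + ε) * Real.log n))) ^ n := by
      filter_upwards [eventually_ge_atTop 1,
        hsmall.eventually_lt_const (by norm_num : (0:ℝ) < 1/2)] with n hn1 hns
      have hn0 : (0:ℝ) < n := by exact_mod_cast hn1
      have hlogn0 : 0 ≤ Real.log n := Real.log_nonneg (by exact_mod_cast hn1)
      have hE1 : Real.exp (-((1 + ε) * Real.log n)) ≤ 1 := by
        rw [Real.exp_le_one_iff, neg_nonpos]
        positivity
      have hE0 : 0 < Real.exp (-((1 + ε) * Real.log n)) := Real.exp_pos _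
      have hb2 : (-2:ℝ) ≤ -(c * Real.exp (-((1 + ε) * Real.log n))) := by
        nlinarith [mul_le_mul_of_nonneg_left hE1 hc0.le]
      have hber := one_add_mul_le_pow hb2 n
      have hne : (n:ℝ) * Real.exp (-((1 + ε) * Real.log n)) = Real.exp (-(ε * Real.log n)) := by
        have h := Real.exp_add (Real.log n) (-((1 + ε) * Real.log n))
        rw [Real.exp_log hn0] at h
        rw [← h]
        congr 1
        ring
      have : 1 + (n:ℝ) * -(c * Real.exp (-((1 + ε) * Real.log n))) =
          1 - c * Real.exp (-(ε * Real.log n)) := by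
        rw [mul_neg, ← mul_assoc, mul_comm (n:ℝ) c, mul_assoc, hne]; ring
      rw [this] at hber
      calc (1:ℝ)/2 ≤ 1 - c * Real.exp (-(ε * Real.log n)) := by linarith
        _ ≤ (1 + -(c * Real.exp (-((1 + ε) * Real.log n)))) ^ n := hber
        _ = (1 - c * Real.exp (-((1 + ε) * Real.log n))) ^ n := by ring_nf
    -- x_n tends to infinity
    have htendx : Tendsto (fun n : ℕ => (1 + ε) * Real.log n / a) atTop atTop :=
      (hlogn.const_mul_atTop (by linarith)).atTop_div_const ha
    have htailev := htendx.eventually (htb ε hε0)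
    have hgap : Tendsto (fun n : ℕ => Real.log (1/2) / Real.log n) atTop (nhds 0) :=
      tendsto_const_nhds.div_atTop hlogn
    have hgapev : ∀ᶠ n : ℕ in atTop,
        b + (μ + ε) * (1 + ε) / a < Real.log (1/2) / Real.log n :=
      hgap.eventually_const_lt (by linarith)
    filter_upwards [hKev, htailev, hgapev, hlogn.eventually_ge_atTop 1,
      eventually_ge_atTop 1] with n hK htn hgn hln hn1
    have hlpos : (0:ℝ) < Real.log n := by linarith
    set x : ℝ := (1 + ε) * Real.log n / a with hx_def
    have hx0 : 0 ≤ x := by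
      rw [hx_def]
      exact div_nonneg (mul_nonneg (by linarith) hlpos.le) ha.le
    have hxa : x * a = (1 + ε) * Real.log n := div_mul_cancel₀ _ ha.ne'
    have hSx := hS n x hx0
    rw [hxa] at hSx
    have hIg : 1/2 * p x ≤ I n := by
      calc 1/2 * p x ≤ (1 - c * Real.exp (-((1 + ε) * Real.log n))) ^ n * p x :=
            mul_le_mul_of_nonneg_right hK (hp_nn x)
        _ ≤ I n := hSx
    have hlogI : Real.log (1/2) + Real.log (p x) ≤ Real.log (I n) := by
      have h1 : Real.log (1/2 * p x) ≤ Real.log (I n) :=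
        Real.log_le_log (mul_pos (by norm_num) (hp_pos x)) hIg
      rwa [Real.log_mul (by norm_num) (hp_pos x).ne'] at h1
    have hlogp : (-μ - ε) * x ≤ Real.log (p x) := htn.1
    have hcomp : (Real.log (1/2) + (-μ - ε) * x) / Real.log n =
        Real.log (1/2) / Real.log n + (-μ - ε) * (1 + ε) / a := by
      rw [hx_def]
      field_simp
    have hnum : Real.log (1/2) + (-μ - ε) * x ≤ Real.log (I n) := by linarith
    have hdiv : (Real.log (1/2) + (-μ - ε) * x) / Real.log n ≤ Real.log (I n) / Real.log n :=
      div_le_div_of_nonneg_right hnum hlpos.le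
    rw [hcomp] at hdiv
    have : b < Real.log (1/2) / Real.log n + (-μ - ε) * (1 + ε) / a := by
      have heq : (-μ - ε) * (1 + ε) / a = -((μ + ε) * (1 + ε) / a) := by ring
      rw [heq]
      linarith
    linarith
  · -- upper bound branch
    intro b hb
    have hd : 0 < b + μ / a := by
      have : -(μ/a) < b := hb
      linarith
    set d : ℝ := b + μ / a with hd_def
    set ε : ℝ := min (1/2) (d * a / (2 * (1 + μ))) with hε_def
    have hε0 : 0 < ε := lt_min (by norm_num) (div_pos (mul_pos hd ha) (by linarith))
    have hε1 : ε ≤ 1/2 := min_le_left _ _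
    have hεle : ε * (2 * (1 + μ)) ≤ d * a := by
      have h := min_le_right (1/2 : ℝ) (d * a / (2 * (1 + μ)))
      calc ε * (2 * (1 + μ)) ≤ (d * a / (2 * (1 + μ))) * (2 * (1 + μ)) := by
            apply mul_le_mul_of_nonneg_right h; positivity
        _ = d * a := div_mul_cancel₀ _ (by positivity)
    have hkey : (-μ + ε) * (1 - ε) / a < b := by
      rw [div_lt_iff₀ ha]
      have hba : b * a = d * a - μ := by
        rw [hd_def]; field_simp; ring
      nlinarith [sq_nonneg ε, hε0.le, hμ.le]
    have h1ε : (0:ℝ) < 1 - ε := by linarith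
    -- growth of c * exp(ε y) vs y
    have hgrow : Tendsto (fun y : ℝ => c * Real.exp (ε * y) / y) atTop atTop := by
      have h1 : Tendsto (fun y : ℝ => Real.exp (ε * y) / (ε * y) ^ 1) atTop atTop :=
        (Real.tendsto_exp_div_pow_atTop 1).comp (tendsto_id.const_mul_atTop hε0)
      have h2 := h1.const_mul_atTop (mul_pos hc0 hε0)
      refine h2.congr' ?_
      filter_upwards [eventually_gt_atTop (0:ℝ)] with y hy
      field_simp
    have hgrowev : ∀ᶠ y : ℝ in atTop,
        ((μ + 1) * (1 - ε) / a) * y ≤ c * Real.exp (ε * y) := by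
      filter_upwards [hgrow.eventually_ge_atTop ((μ + 1) * (1 - ε) / a),
        eventually_gt_atTop (0:ℝ)] with y hy hy0
      calc ((μ + 1) * (1 - ε) / a) * y ≤ (c * Real.exp (ε * y) / y) * y :=
            mul_le_mul_of_nonneg_right hy hy0.le
        _ = c * Real.exp (ε * y) := div_mul_cancel₀ _ hy0.ne'
    have hgrown : ∀ᶠ n : ℕ in atTop,
        ((μ + 1) * (1 - ε) / a) * Real.log n ≤ c * Real.exp (ε * Real.log n) :=
      hlogn.eventually hgrowev
    have htendx : Tendsto (fun n : ℕ => (1 - ε) * Real.log n / a) atTop atTop :=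
      (hlogn.const_mul_atTop h1ε).atTop_div_const ha
    have htailev := htendx.eventually (htb 1 one_pos)
    have htailev2 := htendx.eventually (htb ε hε0)
    have hgap : Tendsto (fun n : ℕ => Real.log 2 / Real.log n) atTop (nhds 0) :=
      tendsto_const_nhds.div_atTop hlogn
    have hgapev : ∀ᶠ n : ℕ in atTop,
        Real.log 2 / Real.log n < b - (-μ + ε) * (1 - ε) / a :=
      hgap.eventually_lt_const (by linarith)
    filter_upwards [htailev, htailev2, hgrown, hgapev, hlogn.eventually_ge_atTop 1,
      eventually_ge_atTop 1] with n htn htn2 hgrn hgn hln hn1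
    have hlpos : (0:ℝ) < Real.log n := by linarith
    have hn0 : (0:ℝ) < n := by exact_mod_cast hn1
    set x : ℝ := (1 - ε) * Real.log n / a with hx_def
    have hx0 : 0 ≤ x := by
      rw [hx_def]
      exact div_nonneg (mul_nonneg (by linarith) hlpos.le) ha.le
    have hxa : x * a = (1 - ε) * Real.log n := div_mul_cancel₀ _ ha.ne'
    -- split the integral
    have hsplit : I n = (∫ ω in {ω | L ω > x},
          (1 - c * Real.exp (-(L ω * ((M:ℝ) - 1) * max lam ν))) ^ n ∂P) +
        ∫ ω in {ω | L ω > x}ᶜ,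
          (1 - c * Real.exp (-(L ω * ((M:ℝ) - 1) * max lam ν))) ^ n ∂P :=
      (integral_add_compl (hpmeas x) (hint n)).symm
    -- first piece ≤ p x
    have hpiece1 : ∫ ω in {ω | L ω > x},
        (1 - c * Real.exp (-(L ω * ((M:ℝ) - 1) * max lam ν))) ^ n ∂P ≤ p x := by
      have h1 : ∫ ω in {ω | L ω > x},
          (1 - c * Real.exp (-(L ω * ((M:ℝ) - 1) * max lam ν))) ^ n ∂P ≤
          ∫ _ω in {ω | L ω > x}, (1:ℝ) ∂P := by
        refine setIntegral_mono_on ((hint n).integrableOn)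
          integrableOn_const (hpmeas x) ?_
        intro ω _
        exact pow_le_one₀ (by linarith [(hbase ω).1]) (hbase ω).2
      have h2 : ∫ _ω in {ω | L ω > x}, (1:ℝ) ∂P = p x := by
        rw [setIntegral_const]; simp [hp_def, measureReal_def]
      linarith
    -- second piece ≤ exp(-(c * exp(ε log n)))
    have hpiece2 : ∫ ω in {ω | L ω > x}ᶜ,
        (1 - c * Real.exp (-(L ω * ((M:ℝ) - 1) * max lam ν))) ^ n ∂P ≤
        Real.exp (-(c * Real.exp (ε * Real.log n))) := by
      have hE1 : Real.exp (-(x * a)) ≤ 1 := by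
        rw [Real.exp_le_one_iff, neg_nonpos]
        exact mul_nonneg hx0 ha.le
      have hKb : (1 - c * Real.exp (-(x * a))) ≤ Real.exp (-(c * Real.exp (-(x * a)))) := by
        linarith [Real.add_one_le_exp (-(c * Real.exp (-(x * a))))]
      have hK0 : 0 ≤ 1 - c * Real.exp (-(x * a)) := by
        nlinarith [mul_le_mul_of_nonneg_left hE1 hc0.le]
      have h1 : ∫ ω in {ω | L ω > x}ᶜ,
          (1 - c * Real.exp (-(L ω * ((M:ℝ) - 1) * max lam ν))) ^ n ∂P ≤
          ∫ _ω in {ω | L ω > x}ᶜ, (1 - c * Real.exp (-(x * a))) ^ n ∂P := by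
        refine setIntegral_mono_on ((hint n).integrableOn)
          integrableOn_const (hpmeas x).compl ?_
        intro ω hω
        have hωle : L ω ≤ x := by simpa using hω
        refine pow_le_pow_left₀ (by linarith [(hbase ω).1]) ?_ n
        have hmono : Real.exp (-(x * a)) ≤ Real.exp (-(L ω * ((M:ℝ) - 1) * max lam ν)) := by
          rw [Real.exp_le_exp, neg_le_neg_iff, hLa ω]
          exact mul_le_mul_of_nonneg_right hωle ha.le
        nlinarith [mul_le_mul_of_nonneg_left hmono hc0.le]
      have h2 : ∫ _ω in {ω | L ω > x}ᶜ, (1 - c * Real.exp (-(x * a))) ^ n ∂P ≤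
          (1 - c * Real.exp (-(x * a))) ^ n := by
        rw [setIntegral_const]
        have hle1 : ((P {ω | L ω > x}ᶜ).toReal) ≤ 1 := by
          have := ENNReal.toReal_mono (by norm_num)
            (prob_le_one (μ := P) (s := {ω | L ω > x}ᶜ))
          simpa using this
        have hKn : 0 ≤ (1 - c * Real.exp (-(x * a))) ^ n := pow_nonneg hK0 n
        calc (P {ω | L ω > x}ᶜ).toReal • (1 - c * Real.exp (-(x * a))) ^ n
            = (P {ω | L ω > x}ᶜ).toReal * (1 - c * Real.exp (-(x * a))) ^ n := rfl
          _ ≤ 1 * (1 - c * Real.exp (-(x * a))) ^ n :=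
              mul_le_mul_of_nonneg_right hle1 hKn
          _ = (1 - c * Real.exp (-(x * a))) ^ n := one_mul _
      have h3 : (1 - c * Real.exp (-(x * a))) ^ n ≤
          Real.exp (-(c * Real.exp (-(x * a)))) ^ n := pow_le_pow_left₀ hK0 hKb n
      have h4 : Real.exp (-(c * Real.exp (-(x * a)))) ^ n =
          Real.exp ((n:ℝ) * -(c * Real.exp (-(x * a)))) := by
        rw [← Real.exp_nat_mul]
      have h5 : (n:ℝ) * -(c * Real.exp (-(x * a))) = -(c * Real.exp (ε * Real.log n)) := by
        rw [hxa]
        have : (n:ℝ) * Real.exp (-((1 - ε) * Real.log n)) = Real.exp (ε * Real.log n) := by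
          have h := Real.exp_add (Real.log n) (-((1 - ε) * Real.log n))
          rw [Real.exp_log hn0] at h
          rw [← h]
          congr 1
          ring
        rw [mul_neg, ← mul_assoc, mul_comm (n:ℝ) c, mul_assoc, this]
      rw [h5] at h4
      calc ∫ ω in {ω | L ω > x}ᶜ,
            (1 - c * Real.exp (-(L ω * ((M:ℝ) - 1) * max lam ν))) ^ n ∂P ≤
            (1 - c * Real.exp (-(x * a))) ^ n := le_trans h1 h2
        _ ≤ Real.exp (-(c * Real.exp (-(x * a)))) ^ n := h3
        _ = Real.exp (-(c * Real.exp (ε * Real.log n))) := h4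
    -- exp(-(c exp(ε log n))) ≤ p x eventually
    have hexp_le_p : Real.exp (-(c * Real.exp (ε * Real.log n))) ≤ p x := by
      have hlow : (-μ - 1) * x ≤ Real.log (p x) := htn.1
      have h1 : Real.exp ((-μ - 1) * x) ≤ p x := by
        calc Real.exp ((-μ - 1) * x) ≤ Real.exp (Real.log (p x)) := Real.exp_le_exp.2 hlow
          _ = p x := Real.exp_log (hp_pos x)
      refine le_trans (Real.exp_le_exp.2 ?_) h1
      -- -(c exp(ε log n)) ≤ (-μ-1) x
      have hx_eq : (-μ - 1) * x = -(((μ + 1) * (1 - ε) / a) * Real.log n) := by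
        rw [hx_def]; field_simp; ring
      rw [hx_eq, neg_le_neg_iff]
      exact hgrn
    -- combine
    have hIub : I n ≤ 2 * p x := by
      rw [hsplit]
      linarith
    have hlogI : Real.log (I n) ≤ Real.log 2 + Real.log (p x) := by
      have h1 : Real.log (I n) ≤ Real.log (2 * p x) := Real.log_le_log (hIpos n) hIub
      rwa [Real.log_mul (by norm_num) (hp_pos x).ne'] at h1
    have hlogp : Real.log (p x) ≤ (-μ + ε) * x := htn2.2
    have hnum : Real.log (I n) ≤ Real.log 2 + (-μ + ε) * x := by linarith
    have hcomp : (Real.log 2 + (-μ + ε) * x) / Real.log n =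
        Real.log 2 / Real.log n + (-μ + ε) * (1 - ε) / a := by
      rw [hx_def]
      field_simp
    have hdiv : Real.log (I n) / Real.log n ≤ (Real.log 2 + (-μ + ε) * x) / Real.log n :=
      div_le_div_of_nonneg_right hnum hlpos.le
    rw [hcomp] at hdiv
    linarith
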